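/- Let R be a commutative ring in which 2 is a unit, let m be a natural number, and let K be a set of subsets of Fin m that contains the empty set and is closed under taking subsets (an abstract simplicial complex on [m]). Let 𝓡^K denote the quotient of the free (noncommutative) R-algebra on 2m generators u_1,…,u_m, t_1,…,t_m by the two-sided ideal generated by the elements u_i u_i, u_i t_i − u_i, t_i u_i + u_i, t_i t_i − 1 for all i, the elements u_i u_j + u_j u_i, u_i t_j − t_j u_i, t_i t_j − t_j t_i for all i ≠ j, and the square-free monomials u_{i_1} u_{i_2} ⋯ u_{i_k} (with i_1 < i_2 < ⋯ < i_k) for every subset {i_1,…,i_k} of Fin m that is not a member of K. Then 𝓡^K is a free R-module; more precisely, the images in 𝓡^K of the monomials u_σ t_{ω∖σ} := u_{i_1}⋯u_{i_k} · t_{j_1}⋯t_{j_l}, where σ = {i_1 < ⋯ < i_k} and ω∖σ = {j_1 < ⋯ < j_l} and the indexing pairs range over all σ ⊆ ω ⊆ Fin m with σ ∈ K, form a basis of 𝓡^K as an R-module. -/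

import Mathlib

noncomputable section

variable (R : Type*) [CommRing R] (m : ℕ)

/-- The generator `u_i` in the free `R`-algebra on `2m` generators. -/
def genU (i : Fin m) : FreeAlgebra R (Fin m ⊕ Fin m) :=
  FreeAlgebra.ι R (Sum.inl i)

/-- The generator `t_i` in the free `R`-algebra on `2m` generators. -/
def genT (i : Fin m) : FreeAlgebra R (Fin m ⊕ Fin m) :=
  FreeAlgebra.ι R (Sum.inr i)

/-- The square-free ordered monomial `u_τ = u_{a_1} ⋯ u_{a_r}` for
`τ = {a_1 < ⋯ < a_r}`. -/
def uMon (τ : Finset (Fin m)) : FreeAlgebra R (Fin m ⊕ Fin m) :=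
  ((τ.sort (· ≤ ·)).map (genU R m)).prod

/-- The square-free ordered monomial `t_τ = t_{a_1} ⋯ t_{a_r}` for
`τ = {a_1 < ⋯ < a_r}`. -/
def tMon (τ : Finset (Fin m)) : FreeAlgebra R (Fin m ⊕ Fin m) :=
  ((τ.sort (· ≤ ·)).map (genT R m)).prod

/-- The set of defining relators of `𝓡^K`: the relations among the `u_i, t_i`
together with the Stanley–Reisner relations associated to the non-faces of `K`. -/
def relators (K : Set (Finset (Fin m))) : Set (FreeAlgebra R (Fin m ⊕ Fin m)) :=
  (⋃ i : Fin m,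
      {genU R m i * genU R m i,
       genU R m i * genT R m i - genU R m i,
       genT R m i * genU R m i + genU R m i,
       genT R m i * genT R m i - 1}) ∪
  (⋃ (i : Fin m) (j : Fin m) (_ : i ≠ j),
      {genU R m i * genU R m j + genU R m j * genU R m i,
       genU R m i * genT R m j - genT R m j * genU R m i,
       genT R m i * genT R m j - genT R m j * genT R m i}) ∪
  {x | ∃ σ : Finset (Fin m), σ ∉ K ∧ x = uMon R m σ}

/-- The relation whose induced ring congruence quotients the free algebra by the
two-sided ideal generated by the relators. -/
def relRK (K : Set (Finset (Fin m))) :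
    FreeAlgebra R (Fin m ⊕ Fin m) → FreeAlgebra R (Fin m ⊕ Fin m) → Prop :=
  fun a b => a ∈ relators R m K ∧ b = 0

/-- The algebra `𝓡^K`, the quotient of the free algebra by the two-sided ideal
generated by the relators. -/
def RK (K : Set (Finset (Fin m))) : Type _ :=
  RingQuot (relRK R m K)

instance (K : Set (Finset (Fin m))) : Ring (RK R m K) := by
  unfold RK; infer_instance

instance (K : Set (Finset (Fin m))) : Algebra R (RK R m K) := by
  unfold RK; infer_instance

/-- The quotient map onto `𝓡^K`. -/
def mkRK (K : Set (Finset (Fin m))) :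
    FreeAlgebra R (Fin m ⊕ Fin m) →ₐ[R] RK R m K :=
  RingQuot.mkAlgHom R (relRK R m K)


namespace SRAux
set_option linter.dupNamespace false
open scoped symmDiff Classical
variable {R : Type*} [CommRing R] {m : ℕ} {K : Set (Finset (Fin m))}

abbrev Idx (m : ℕ) (K : Set (Finset (Fin m))) :=
  {p : Finset (Fin m) × Finset (Fin m) // p.1 ⊆ p.2 ∧ p.1 ∈ K}

def sgn (R : Type*) [CommRing R] {m : ℕ} (i : Fin m) (σ : Finset (Fin m)) : R :=
  (-1) ^ ((σ.filter (· < i)).card)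

def UactF (i : Fin m) (p : Idx m K) : Idx m K →₀ R :=
  if i ∈ p.1.1 then 0 else if hK : insert i p.1.1 ∈ K then
    sgn R i p.1.1 • Finsupp.single ⟨(insert i p.1.1, insert i p.1.2),
      Finset.insert_subset_insert i p.2.1, hK⟩ 1
  else 0

def TactF (i : Fin m) (p : Idx m K) : Idx m K →₀ R :=
  if h : i ∈ p.1.1 then -Finsupp.single p 1
  else Finsupp.single ⟨(p.1.1, p.1.2 ∆ {i}),
    fun j hj => by
      simp only [Finset.mem_symmDiff, Finset.mem_singleton]
      exact Or.inl ⟨p.2.1 hj, fun e => h (e ▸ hj)⟩, p.2.2⟩ 1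

def Uop (K : Set (Finset (Fin m))) (i : Fin m) : (Idx m K →₀ R) →ₗ[R] (Idx m K →₀ R) :=
  Finsupp.linearCombination R (UactF i)

def Top (K : Set (Finset (Fin m))) (i : Fin m) : (Idx m K →₀ R) →ₗ[R] (Idx m K →₀ R) :=
  Finsupp.linearCombination R (TactF i)

@[simp] lemma Uop_single (i : Fin m) (p : Idx m K) :
    Uop K i (Finsupp.single p (1 : R)) = UactF i p := by
  simp [Uop]

@[simp] lemma Top_single (i : Fin m) (p : Idx m K) :
    Top K i (Finsupp.single p (1 : R)) = TactF i p := by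
  simp [Top]

def actAlg (R : Type*) [CommRing R] (m : ℕ) (K : Set (Finset (Fin m))) :
    FreeAlgebra R (Fin m ⊕ Fin m) →ₐ[R] Module.End R (Idx m K →₀ R) :=
  FreeAlgebra.lift R (Sum.elim (fun i => Uop K i) (fun i => Top K i))

@[simp] lemma actAlg_genU (i : Fin m) : actAlg R m K (genU R m i) = Uop K i := by
  simp [actAlg, genU]

@[simp] lemma actAlg_genT (i : Fin m) : actAlg R m K (genT R m i) = Top K i := by
  simp [actAlg, genT]

lemma single_congr {A A' B B' : Finset (Fin m)} {h : (A,B).1 ⊆ (A,B).2 ∧ (A,B).1 ∈ K}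
    {h' : (A',B').1 ⊆ (A',B').2 ∧ (A',B').1 ∈ K} (hA : A = A') (hB : B = B') :
    (Finsupp.single (⟨(A,B),h⟩ : Idx m K) (1:R)) = Finsupp.single ⟨(A',B'),h'⟩ 1 := by
  subst hA; subst hB; rfl

lemma sgn_insert_of_lt {i j : Fin m} (h : j < i) {σ : Finset (Fin m)} (hj : j ∉ σ) :
    sgn R i (insert j σ) = -sgn R i σ := by
  unfold sgn
  rw [Finset.filter_insert, if_pos h, Finset.card_insert_of_notMem (by simp [hj]),
    pow_succ]
  ring

lemma sgn_insert_of_not_lt {i j : Fin m} (h : ¬ j < i) (σ : Finset (Fin m)) :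
    sgn R i (insert j σ) = sgn R i σ := by
  unfold sgn
  rw [Finset.filter_insert, if_neg h]

lemma sgn_cross {i j : Fin m} (hij : i ≠ j) {σ : Finset (Fin m)} (hi : i ∉ σ) (hj : j ∉ σ) :
    sgn R j σ * sgn R i (insert j σ) + sgn R i σ * sgn R j (insert i σ) = 0 := by
  rcases hij.lt_or_gt with h | h
  · rw [sgn_insert_of_lt h hi, sgn_insert_of_not_lt (not_lt.2 h.le)]
    ring
  · rw [sgn_insert_of_lt h hj, sgn_insert_of_not_lt (not_lt.2 h.le)]
    ring

lemma uu_zero (i : Fin m) (p : Idx m K) : Uop K i (UactF i p : Idx m K →₀ R) = 0 := by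
  unfold UactF
  split_ifs with h1 h2
  · simp
  · rw [map_smul, Uop_single]
    unfold UactF
    rw [if_pos (Finset.mem_insert_self i _)]
    simp
  · simp

lemma ut_eq (i : Fin m) (p : Idx m K) : Uop K i (TactF i p : Idx m K →₀ R) = UactF i p := by
  unfold TactF
  split_ifs with h1
  · simp [UactF, h1]
  · rw [Uop_single]
    unfold UactF
    simp only [if_neg h1]
    split_ifs with h2
    · exact congrArg _ (single_congr rfl (by
        ext x; by_cases hx : x = i <;> simp [Finset.mem_symmDiff, hx]))
    · rfl

lemma tu_eq (i : Fin m) (p : Idx m K) : Top K i (UactF i p : Idx m K →₀ R) = -UactF i p := by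
  unfold UactF
  split_ifs with h1 h2
  · simp
  · rw [map_smul, Top_single]
    unfold TactF
    rw [dif_pos (Finset.mem_insert_self i _)]
    simp
  · simp

lemma tt_eq (i : Fin m) (p : Idx m K) :
    Top K i (TactF i p : Idx m K →₀ R) = Finsupp.single p 1 := by
  unfold TactF
  split_ifs with h1
  · rw [map_neg, Top_single]
    unfold TactF
    rw [dif_pos h1]
    simp
  · rw [Top_single]
    unfold TactF
    rw [dif_neg h1]
    obtain ⟨⟨A,B⟩, hp⟩ := p
    exact single_congr rfl (by simp)

lemma uu_cross (hKdown : ∀ σ τ : Finset (Fin m), σ ⊆ τ → τ ∈ K → σ ∈ K)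
    {i j : Fin m} (hij : i ≠ j) (p : Idx m K) :
    Uop K i (UactF j p : Idx m K →₀ R) + Uop K j (UactF i p) = 0 := by
  obtain ⟨⟨σ, ω⟩, hsub, hσK⟩ := p
  by_cases hj : j ∈ σ
  · rw [show (UactF j ⟨(σ, ω), hsub, hσK⟩ : Idx m K →₀ R) = 0 from if_pos hj,
      map_zero, zero_add]
    unfold UactF
    by_cases hi : i ∈ σ
    · rw [if_pos hi, map_zero]
    · rw [if_neg hi]
      split_ifs with h2
      · rw [map_smul, Uop_single]
        unfold UactF
        rw [if_pos (Finset.mem_insert_of_mem hj)]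
        simp
      · simp
  · by_cases hi : i ∈ σ
    · rw [show (UactF i ⟨(σ, ω), hsub, hσK⟩ : Idx m K →₀ R) = 0 from if_pos hi,
        map_zero, add_zero]
      unfold UactF
      rw [if_neg hj]
      split_ifs with h2
      · rw [map_smul, Uop_single]
        unfold UactF
        rw [if_pos (Finset.mem_insert_of_mem hi)]
        simp
      · simp
    · have hij' : i ∉ insert j σ := by simp [hij, hi]
      have hji' : j ∉ insert i σ := by simp [hij.symm, hj]
      unfold UactF
      dsimp only
      rw [if_neg hi, if_neg hj]
      by_cases hKj : insert j σ ∈ K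
      · rw [dif_pos hKj]
        by_cases hKi : insert i σ ∈ K
        · rw [dif_pos hKi, map_smul, map_smul, Uop_single, Uop_single]
          unfold UactF
          dsimp only
          rw [if_neg hij', if_neg hji']
          by_cases hKij : insert i (insert j σ) ∈ K
          · rw [dif_pos hKij, dif_pos (show insert j (insert i σ) ∈ K by rwa [Finset.insert_comm])]
            rw [smul_smul, smul_smul,
              single_congr (K := K) (Finset.insert_comm j i σ) (Finset.insert_comm j i ω),
              ← add_smul, sgn_cross hij hi hj, zero_smul]
            exact ⟨Finset.insert_subset_insert i (Finset.insert_subset_insert j hsub), hKij⟩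
          · rw [dif_neg hKij, dif_neg (show insert j (insert i σ) ∉ K by rwa [Finset.insert_comm]), smul_zero, smul_zero,
              add_zero]
        · rw [dif_neg hKi, map_zero, add_zero, map_smul, Uop_single]
          unfold UactF
          dsimp only
          rw [if_neg hij',
            dif_neg (fun h => hKi (hKdown _ _ (Finset.insert_subset_insert i (Finset.subset_insert j σ)) h)),
            smul_zero]
      · rw [dif_neg hKj, map_zero, zero_add]
        by_cases hKi : insert i σ ∈ K
        · rw [dif_pos hKi, map_smul, Uop_single]
          unfold UactF
          dsimp only
          rw [if_neg hji',
            dif_neg (fun h => hKj (hKdown _ _ (Finset.insert_subset_insert j (Finset.subset_insert i σ)) h)),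
            smul_zero]
        · rw [dif_neg hKi, map_zero]

lemma ut_cross {i j : Fin m} (hij : i ≠ j) (p : Idx m K) :
    Uop K i (TactF j p : Idx m K →₀ R) = Top K j (UactF i p) := by
  obtain ⟨⟨σ, ω⟩, hsub, hσK⟩ := p
  by_cases hj : j ∈ σ
  · rw [show (TactF j ⟨(σ, ω), hsub, hσK⟩ : Idx m K →₀ R) = -Finsupp.single _ 1 from dif_pos hj,
      map_neg, Uop_single]
    unfold UactF
    dsimp only
    by_cases hi : i ∈ σ
    · rw [if_pos hi]; simp
    · rw [if_neg hi]
      split_ifs with h2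
      · rw [map_smul, Top_single]
        unfold TactF
        rw [dif_pos (Finset.mem_insert_of_mem hj)]
        simp
      · simp
  · rw [show (TactF j ⟨(σ, ω), hsub, hσK⟩ : Idx m K →₀ R) = Finsupp.single _ 1 from dif_neg hj,
      Uop_single]
    unfold UactF
    dsimp only
    by_cases hi : i ∈ σ
    · rw [if_pos hi, if_pos hi, map_zero]
    · rw [if_neg hi, if_neg hi]
      split_ifs with h2
      · rw [map_smul, Top_single]
        unfold TactF
        rw [dif_neg (by simp [hij.symm, hj])]
        exact congrArg _ (single_congr rfl (by
          ext x; by_cases hx : x = j <;> by_cases hxi : x = i <;>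
            simp [Finset.mem_symmDiff, hx, hxi, hij, hij.symm]))
      · rw [map_zero]

lemma tt_cross (i j : Fin m) (p : Idx m K) :
    Top K i (TactF j p : Idx m K →₀ R) = Top K j (TactF i p) := by
  obtain ⟨⟨σ, ω⟩, hsub, hσK⟩ := p
  unfold TactF
  dsimp only
  by_cases hi : i ∈ σ <;> by_cases hj : j ∈ σ
  · rw [dif_pos hi, dif_pos hj, map_neg, map_neg, Top_single, Top_single]
    unfold TactF
    rw [dif_pos hi, dif_pos hj]
  · rw [dif_pos hi, dif_neg hj, map_neg, Top_single, Top_single]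
    unfold TactF
    rw [dif_pos hi, dif_neg hj]
  · rw [dif_neg hi, dif_pos hj, map_neg, Top_single, Top_single]
    unfold TactF
    rw [dif_pos hj, dif_neg hi]
  · rw [dif_neg hi, dif_neg hj, Top_single, Top_single]
    unfold TactF
    rw [dif_neg hi, dif_neg hj]
    exact single_congr rfl (by
      rw [symmDiff_assoc, symmDiff_assoc, symmDiff_comm ({j} : Finset (Fin m))])

lemma endo_ext {f g : (Idx m K →₀ R) →ₗ[R] (Idx m K →₀ R)}
    (h : ∀ p, f (Finsupp.single p 1) = g (Finsupp.single p 1)) : f = g := by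
  refine Finsupp.lhom_ext fun p b => ?_
  have hb : (Finsupp.single p b : Idx m K →₀ R) = b • Finsupp.single p 1 := by
    rw [Finsupp.smul_single, smul_eq_mul, mul_one]
  rw [hb, map_smul, map_smul, h]

lemma act_Ul_structure (l : List (Fin m)) (p : Idx m K) :
    (actAlg R m K ((l.map (genU R m)).prod)) (Finsupp.single p 1) = 0 ∨
    ∃ (c : R) (q : Idx m K), l.toFinset ⊆ q.1.1 ∧
      (actAlg R m K ((l.map (genU R m)).prod)) (Finsupp.single p 1)
        = c • Finsupp.single q 1 := by
  induction l generalizing p with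
  | nil => exact Or.inr ⟨1, p, by simp, by simp⟩
  | cons a l ih =>
    rw [List.map_cons, List.prod_cons, map_mul, Module.End.mul_apply]
    rcases ih p with h0 | ⟨c, q, hsub, heq⟩
    · rw [h0, map_zero]; exact Or.inl rfl
    · rw [heq, map_smul, actAlg_genU, Uop_single]
      unfold UactF
      split_ifs with h1 h2
      · simp
      · refine Or.inr ⟨c * sgn R a q.1.1,
          ⟨(insert a q.1.1, insert a q.1.2), Finset.insert_subset_insert a q.2.1, h2⟩, ?_, ?_⟩
        · rw [List.toFinset_cons]
          exact Finset.insert_subset_insert a hsub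
        · rw [smul_smul]
      · simp

lemma actAlg_uMon_eq_zero (hKdown : ∀ σ τ : Finset (Fin m), σ ⊆ τ → τ ∈ K → σ ∈ K)
    {σ : Finset (Fin m)} (hσ : σ ∉ K) : actAlg R m K (uMon R m σ) = 0 := by
  refine endo_ext fun p => ?_
  rw [LinearMap.zero_apply]
  rcases act_Ul_structure (R := R) (σ.sort (· ≤ ·)) p with h0 | ⟨c, q, hsub, heq⟩
  · exact h0
  · exfalso
    rw [Finset.sort_toFinset] at hsub
    exact hσ (hKdown _ _ hsub q.2.2)

lemma act_relators (hKdown : ∀ σ τ : Finset (Fin m), σ ⊆ τ → τ ∈ K → σ ∈ K)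
    {x : FreeAlgebra R (Fin m ⊕ Fin m)} (hx : x ∈ relators R m K) :
    actAlg R m K x = 0 := by
  rcases hx with (hx | hx) | hx
  · rw [Set.mem_iUnion] at hx
    obtain ⟨i, hmem⟩ := hx
    simp only [Set.mem_insert_iff, Set.mem_singleton_iff] at hmem
    rcases hmem with rfl | rfl | rfl | rfl
    · refine endo_ext fun p => ?_
      simp [Module.End.mul_apply, uu_zero]
    · refine endo_ext fun p => ?_
      simp [Module.End.mul_apply, ut_eq]
    · refine endo_ext fun p => ?_
      simp [Module.End.mul_apply, tu_eq]
    · refine endo_ext fun p => ?_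
      simp [Module.End.mul_apply, Module.End.one_apply, tt_eq]
  · rw [Set.mem_iUnion] at hx
    obtain ⟨i, hx⟩ := hx
    rw [Set.mem_iUnion] at hx
    obtain ⟨j, hx⟩ := hx
    rw [Set.mem_iUnion] at hx
    obtain ⟨hij, hmem⟩ := hx
    simp only [Set.mem_insert_iff, Set.mem_singleton_iff] at hmem
    rcases hmem with rfl | rfl | rfl
    · refine endo_ext fun p => ?_
      simpa [Module.End.mul_apply] using uu_cross hKdown hij p
    · refine endo_ext fun p => ?_
      simp only [map_sub, map_mul, actAlg_genU, actAlg_genT, LinearMap.sub_apply,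
        Module.End.mul_apply, Uop_single, Top_single, LinearMap.zero_apply]
      rw [sub_eq_zero]
      exact ut_cross hij p
    · refine endo_ext fun p => ?_
      simp only [map_sub, map_mul, actAlg_genT, LinearMap.sub_apply,
        Module.End.mul_apply, Top_single, LinearMap.zero_apply]
      rw [sub_eq_zero]
      exact tt_cross i j p
  · obtain ⟨σ, hσ, rfl⟩ := hx
    exact actAlg_uMon_eq_zero hKdown hσ

def Φ (hKdown : ∀ σ τ : Finset (Fin m), σ ⊆ τ → τ ∈ K → σ ∈ K) :
    RK R m K →ₐ[R] Module.End R (Idx m K →₀ R) :=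
  RingQuot.liftAlgHom R ⟨actAlg R m K, fun x y hxy => by
    rcases hxy with ⟨hx, rfl⟩
    rw [act_relators hKdown hx, map_zero]⟩

lemma Φ_mk (hKdown : ∀ σ τ : Finset (Fin m), σ ⊆ τ → τ ∈ K → σ ∈ K)
    (x : FreeAlgebra R (Fin m ⊕ Fin m)) :
    Φ hKdown (mkRK R m K x) = actAlg R m K x :=
  RingQuot.liftAlgHom_mkAlgHom_apply R (actAlg R m K) _ x

lemma act_Tl (hK₀ : ∅ ∈ K) (l : List (Fin m)) (hl : l.Nodup) :
    ∀ (ω : Finset (Fin m)) (h1 : ((∅ : Finset (Fin m)), ω).1 ⊆ ((∅ : Finset (Fin m)), ω).2)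
      (h2 : ((∅ : Finset (Fin m)), ω).1 ∈ K),
    actAlg R m K ((l.map (genT R m)).prod) (Finsupp.single ⟨(∅, ω), h1, h2⟩ 1)
      = Finsupp.single ⟨(∅, ω ∆ l.toFinset), Finset.empty_subset _, hK₀⟩ 1 := by
  induction l with
  | nil =>
    intro ω h1 h2
    rw [List.map_nil, List.prod_nil, map_one, Module.End.one_apply]
    exact single_congr rfl (by rw [List.toFinset_nil]; exact (symmDiff_bot ω).symm)
  | cons a l ih =>
    intro ω h1 h2
    have ha : a ∉ l := (List.nodup_cons.1 hl).1
    rw [List.map_cons, List.prod_cons, map_mul, Module.End.mul_apply,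
      ih (List.nodup_cons.1 hl).2 ω h1 h2, actAlg_genT, Top_single]
    unfold TactF
    rw [dif_neg (Finset.notMem_empty a)]
    refine single_congr rfl ?_
    rw [List.toFinset_cons,
      show insert a l.toFinset = l.toFinset ∆ {a} by
        ext x; by_cases hx : x = a <;>
          simp [Finset.mem_symmDiff, hx, List.mem_toFinset, ha],
      ← symmDiff_assoc]

lemma act_Ul (hKdown : ∀ σ τ : Finset (Fin m), σ ⊆ τ → τ ∈ K → σ ∈ K)
    (l : List (Fin m)) (hl : l.Pairwise (· < ·)) :
    ∀ (σ ω : Finset (Fin m)) (h1 : (σ, ω).1 ⊆ (σ, ω).2) (h2 : (σ, ω).1 ∈ K)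
      (hmem : l.toFinset ∪ σ ∈ K) (hlt : ∀ x ∈ l, ∀ y ∈ σ, x < y),
    actAlg R m K ((l.map (genU R m)).prod) (Finsupp.single ⟨(σ, ω), h1, h2⟩ 1)
      = Finsupp.single ⟨(l.toFinset ∪ σ, l.toFinset ∪ ω),
          Finset.union_subset_union_right h1, hmem⟩ 1 := by
  induction l with
  | nil =>
    intro σ ω h1 h2 hmem hlt
    rw [List.map_nil, List.prod_nil, map_one, Module.End.one_apply]
    exact single_congr (by simp) (by simp)
  | cons a l ih =>
    intro σ ω h1 h2 hmem hlt
    rw [List.pairwise_cons] at hl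
    have hmem' : l.toFinset ∪ σ ∈ K := by
      refine hKdown _ _ (Finset.union_subset_union_left ?_) hmem
      rw [List.toFinset_cons]
      exact Finset.subset_insert a _
    have haσ : a ∉ σ := fun h => lt_irrefl a (hlt a List.mem_cons_self a h)
    have hal : a ∉ l.toFinset := fun h => lt_irrefl a (hl.1 a (List.mem_toFinset.1 h))
    rw [List.map_cons, List.prod_cons, map_mul, Module.End.mul_apply,
      ih hl.2 σ ω h1 h2 hmem' (fun x hx => hlt x (List.mem_cons_of_mem a hx)),
      actAlg_genU, Uop_single]
    unfold UactF
    dsimp only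
    rw [if_neg (by simp [hal, haσ]),
      dif_pos (show insert a (l.toFinset ∪ σ) ∈ K by
        rwa [← Finset.insert_union, ← List.toFinset_cons]),
      show sgn R a (l.toFinset ∪ σ) = 1 by
        unfold sgn
        rw [Finset.filter_eq_empty_iff.2 ?_, Finset.card_empty, pow_zero]
        intro x hx
        rcases Finset.mem_union.1 hx with hx | hx
        · exact not_lt.2 (hl.1 x (List.mem_toFinset.1 hx)).le
        · exact not_lt.2 (hlt a List.mem_cons_self x hx).le,
      one_smul]
    exact single_congr (by rw [List.toFinset_cons, Finset.insert_union])
      (by rw [List.toFinset_cons, Finset.insert_union])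

def vac (hK₀ : ∅ ∈ K) : Idx m K := ⟨(∅, ∅), Finset.Subset.refl _, hK₀⟩

lemma act_mon (hK₀ : ∅ ∈ K) (hKdown : ∀ σ τ : Finset (Fin m), σ ⊆ τ → τ ∈ K → σ ∈ K)
    (p : Idx m K) :
    actAlg R m K (uMon R m p.1.1 * tMon R m (p.1.2 \ p.1.1))
        (Finsupp.single (vac hK₀) (1 : R)) = Finsupp.single p 1 := by
  obtain ⟨⟨σ, ω⟩, hsub, hσK⟩ := p
  dsimp only
  rw [map_mul, Module.End.mul_apply]
  unfold tMon vac
  rw [act_Tl hK₀ _ (Finset.sort_nodup _ _) ∅ (Finset.Subset.refl _) hK₀]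
  unfold uMon
  rw [act_Ul hKdown _ (List.sortedLT_iff_pairwise.1 (Finset.sortedLT_sort σ)) ∅ (∅ ∆ (Finset.sort (ω \ σ) (· ≤ ·)).toFinset)
    (Finset.empty_subset _) hK₀
    (by rw [Finset.sort_toFinset, Finset.union_empty]; exact hσK)
    (fun x hx y hy => absurd hy (Finset.notMem_empty y))]
  refine single_congr ?_ ?_
  · rw [Finset.sort_toFinset, Finset.union_empty]
  · rw [Finset.sort_toFinset, Finset.sort_toFinset, ← Finset.bot_eq_empty, bot_symmDiff,
      Finset.union_sdiff_of_subset hsub]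

lemma mk_rel {x : FreeAlgebra R (Fin m ⊕ Fin m)} (hx : x ∈ relators R m K) :
    mkRK R m K x = 0 := by
  have h := RingQuot.mkAlgHom_rel R (s := relRK R m K) (x := x) (y := 0) ⟨hx, rfl⟩
  rw [map_zero] at h
  exact h

def qU (R : Type*) [CommRing R] {m : ℕ} (K : Set (Finset (Fin m))) (i : Fin m) : RK R m K :=
  mkRK R m K (genU R m i)

def qT (R : Type*) [CommRing R] {m : ℕ} (K : Set (Finset (Fin m))) (i : Fin m) : RK R m K :=
  mkRK R m K (genT R m i)

def qUl (R : Type*) [CommRing R] {m : ℕ} (K : Set (Finset (Fin m))) (l : List (Fin m)) :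
    RK R m K := (l.map (qU R K)).prod

def qTl (R : Type*) [CommRing R] {m : ℕ} (K : Set (Finset (Fin m))) (l : List (Fin m)) :
    RK R m K := (l.map (qT R K)).prod

lemma qUl_cons (a : Fin m) (l : List (Fin m)) : qUl R K (a :: l) = qU R K a * qUl R K l := by
  simp [qUl]

lemma qTl_cons (a : Fin m) (l : List (Fin m)) : qTl R K (a :: l) = qT R K a * qTl R K l := by
  simp [qTl]

lemma mk_uMon (σ : Finset (Fin m)) : mkRK R m K (uMon R m σ) = qUl R K (σ.sort (· ≤ ·)) := by
  rw [uMon, map_list_prod, qUl, List.map_map]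
  rfl

lemma mk_tMon (τ : Finset (Fin m)) : mkRK R m K (tMon R m τ) = qTl R K (τ.sort (· ≤ ·)) := by
  rw [tMon, map_list_prod, qTl, List.map_map]
  rfl

lemma q_uu (i : Fin m) : qU R K i * qU R K i = 0 := by
  rw [qU, ← map_mul]
  exact mk_rel (Or.inl (Or.inl (Set.mem_iUnion.2 ⟨i, by simp⟩)))

lemma q_ut (i : Fin m) : qU R K i * qT R K i = qU R K i := by
  have h := mk_rel (K := K)
    (Or.inl (Or.inl (Set.mem_iUnion.2 ⟨i, by simp⟩)) :
      genU R m i * genT R m i - genU R m i ∈ relators R m K)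
  rw [map_sub, map_mul, sub_eq_zero] at h
  exact h

lemma q_tu (i : Fin m) : qT R K i * qU R K i = -qU R K i := by
  have h := mk_rel (K := K)
    (Or.inl (Or.inl (Set.mem_iUnion.2 ⟨i, by simp⟩)) :
      genT R m i * genU R m i + genU R m i ∈ relators R m K)
  rw [map_add, map_mul] at h
  exact eq_neg_of_add_eq_zero_left h

lemma q_tt (i : Fin m) : qT R K i * qT R K i = 1 := by
  have h := mk_rel (K := K)
    (Or.inl (Or.inl (Set.mem_iUnion.2 ⟨i, by simp⟩)) :
      genT R m i * genT R m i - 1 ∈ relators R m K)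
  rw [map_sub, map_mul, map_one, sub_eq_zero] at h
  exact h

lemma q_uu' {i j : Fin m} (hij : i ≠ j) : qU R K i * qU R K j = -(qU R K j * qU R K i) := by
  have h := mk_rel (K := K)
    (Or.inl (Or.inr (Set.mem_iUnion.2 ⟨i, Set.mem_iUnion.2 ⟨j, Set.mem_iUnion.2 ⟨hij, by simp⟩⟩⟩)) :
      genU R m i * genU R m j + genU R m j * genU R m i ∈ relators R m K)
  rw [map_add, map_mul, map_mul] at h
  exact eq_neg_of_add_eq_zero_left h

lemma q_ut' {i j : Fin m} (hij : i ≠ j) : qU R K i * qT R K j = qT R K j * qU R K i := by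
  have h := mk_rel (K := K)
    (Or.inl (Or.inr (Set.mem_iUnion.2 ⟨i, Set.mem_iUnion.2 ⟨j, Set.mem_iUnion.2 ⟨hij, by simp⟩⟩⟩)) :
      genU R m i * genT R m j - genT R m j * genU R m i ∈ relators R m K)
  rw [map_sub, map_mul, map_mul, sub_eq_zero] at h
  exact h

lemma commT (i j : Fin m) : Commute (qT R K i) (qT R K j) := by
  rcases eq_or_ne i j with rfl | hij
  · exact Commute.refl _
  · have h := mk_rel (K := K)
      (Or.inl (Or.inr (Set.mem_iUnion.2 ⟨i, Set.mem_iUnion.2 ⟨j,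
          Set.mem_iUnion.2 ⟨hij, by simp⟩⟩⟩)) :
        genT R m i * genT R m j - genT R m j * genT R m i ∈ relators R m K)
    rw [map_sub, map_mul, map_mul, sub_eq_zero] at h
    exact h

lemma q_SR {σ : Finset (Fin m)} (hσ : σ ∉ K) : mkRK R m K (uMon R m σ) = 0 :=
  mk_rel (Or.inr ⟨σ, hσ, rfl⟩)

lemma commT_Ul {i : Fin m} {l : List (Fin m)} (hi : i ∉ l) :
    Commute (qT R K i) (qUl R K l) := by
  refine Commute.list_prod_right _ _ fun x hx => ?_
  obtain ⟨j, hj, rfl⟩ := List.mem_map.1 hx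
  exact (q_ut' (fun h : j = i => hi (h ▸ hj))).symm

lemma qTl_perm {l₁ l₂ : List (Fin m)} (h : l₁.Perm l₂) : qTl R K l₁ = qTl R K l₂ := by
  refine (h.map (qT R K)).prod_eq' ?_
  clear h
  induction l₁ with
  | nil => simp
  | cons a l ih =>
    rw [List.map_cons, List.pairwise_cons]
    refine ⟨fun y hy => ?_, ih⟩
    obtain ⟨j, _, rfl⟩ := List.mem_map.1 hy
    exact commT a j

lemma s1 (i : Fin m) : ∀ l : List (Fin m), i ∈ l →
    qT R K i * qUl R K l = -qUl R K l := by
  intro l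
  induction l with
  | nil => intro h; cases h
  | cons a l ih =>
    intro hl
    rw [qUl_cons]
    rcases eq_or_ne i a with rfl | hia
    · rw [← mul_assoc, q_tu, neg_mul]
    · have hi : i ∈ l := (List.mem_cons.1 hl).resolve_left hia
      rw [← mul_assoc, ← q_ut' hia.symm, mul_assoc, ih hi, mul_neg]

lemma s2 (i : Fin m) : ∀ l : List (Fin m), i ∈ l → l.Nodup →
    qUl R K l * qT R K i = qUl R K l := by
  intro l
  induction l with
  | nil => intro h; cases h
  | cons a l ih =>
    intro hl hnd
    rw [qUl_cons, mul_assoc]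
    rcases eq_or_ne i a with rfl | hia
    · have hi : i ∉ l := (List.nodup_cons.1 hnd).1
      rw [← (commT_Ul hi).eq, ← mul_assoc, q_ut]
    · have hi : i ∈ l := (List.mem_cons.1 hl).resolve_left hia
      rw [ih hi (List.nodup_cons.1 hnd).2]

lemma s3 (i : Fin m) : ∀ l : List (Fin m), l.Pairwise (· < ·) →
    (i ∈ l ∧ qU R K i * qUl R K l = 0) ∨
    (i ∉ l ∧ ∃ c : R, qU R K i * qUl R K l = c • qUl R K (l.orderedInsert (· ≤ ·) i)) := by
  intro l
  induction l with
  | nil =>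
    intro _
    refine Or.inr ⟨by simp, 1, ?_⟩
    simp [List.orderedInsert, qUl_cons, one_smul]
  | cons a l ih =>
    intro hs
    rw [List.pairwise_cons] at hs
    obtain ⟨ha, hs'⟩ := hs
    rcases lt_trichotomy i a with hlt | rfl | hgt
    · refine Or.inr ⟨?_, 1, ?_⟩
      · intro hmem
        rcases List.mem_cons.1 hmem with rfl | h
        · exact lt_irrefl i hlt
        · exact lt_asymm hlt (ha i h)
      · rw [List.orderedInsert, if_pos hlt.le, one_smul, qUl_cons, qUl_cons, qUl_cons]
    · exact Or.inl ⟨List.mem_cons_self, by rw [qUl_cons, ← mul_assoc, q_uu, zero_mul]⟩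
    · have hia : i ≠ a := ne_of_gt hgt
      rcases ih hs' with ⟨hmem, heq⟩ | ⟨hmem, c, heq⟩
      · refine Or.inl ⟨List.mem_cons_of_mem a hmem, ?_⟩
        rw [qUl_cons, ← mul_assoc, q_uu' hia, neg_mul, mul_assoc, heq, mul_zero, neg_zero]
      · refine Or.inr ⟨fun h => hmem ((List.mem_cons.1 h).resolve_left hia), -c, ?_⟩
        rw [qUl_cons, ← mul_assoc, q_uu' hia, neg_mul, mul_assoc, heq, mul_smul_comm,
          show (a :: l).orderedInsert (· ≤ ·) i = a :: l.orderedInsert (· ≤ ·) i from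
            by rw [List.orderedInsert, if_neg (not_le.2 hgt)], qUl_cons]
        exact (@neg_smul R (RK R m K) _ _ Algebra.toModule c _).symm

lemma sort_insert_perm {i : Fin m} {τ : Finset (Fin m)} (hi : i ∉ τ) :
    (Finset.sort (insert i τ) (· ≤ ·)).Perm (i :: Finset.sort τ (· ≤ ·)) :=
  (Finset.sort_perm_toList _ _).trans
    ((Finset.toList_insert hi).trans ((Finset.sort_perm_toList τ _).symm.cons i))

lemma qTl_sort_insert {i : Fin m} {τ : Finset (Fin m)} (hi : i ∉ τ) :
    qTl R K ((insert i τ).sort (· ≤ ·)) = qT R K i * qTl R K (τ.sort (· ≤ ·)) := by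
  rw [qTl_perm (sort_insert_perm hi), qTl_cons]

lemma t_mul_tMon (i : Fin m) (τ : Finset (Fin m)) :
    qT R K i * mkRK R m K (tMon R m τ) = mkRK R m K (tMon R m (τ ∆ {i})) := by
  by_cases hi : i ∈ τ
  · have h1 : τ ∆ {i} = τ \ {i} := by
      ext x; by_cases hx : x = i <;> simp [Finset.mem_symmDiff, hx, hi]
    have h2 : insert i (τ \ {i}) = τ := by rw [← Finset.erase_eq, Finset.insert_erase hi]
    have h3 : mkRK R m K (tMon R m τ) = qT R K i * mkRK R m K (tMon R m (τ \ {i})) := by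
      rw [mk_tMon, mk_tMon]
      conv_lhs => rw [← h2]
      exact qTl_sort_insert (by simp)
    rw [h3, ← mul_assoc, q_tt, one_mul, h1]
  · have h1 : τ ∆ {i} = insert i τ := by
      ext x; by_cases hx : x = i <;> simp [Finset.mem_symmDiff, hx, hi]
    rw [h1, mk_tMon, mk_tMon, qTl_sort_insert hi]

lemma sort_insert_eq {i : Fin m} {σ : Finset (Fin m)} (hi : i ∉ σ) :
    Finset.sort (insert i σ) (· ≤ ·) = (Finset.sort σ (· ≤ ·)).orderedInsert (· ≤ ·) i :=
  List.Perm.eq_of_pairwise'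
    (Finset.pairwise_sort _ _) (List.Pairwise.orderedInsert i _ (Finset.pairwise_sort _ _))
    ((sort_insert_perm hi).trans (List.perm_orderedInsert _ i _).symm)

lemma u_mul_uMon_mem {i : Fin m} {σ : Finset (Fin m)} (hi : i ∈ σ) :
    qU R K i * mkRK R m K (uMon R m σ) = 0 := by
  rw [mk_uMon]
  rcases s3 (R := R) (K := K) i _ (List.sortedLT_iff_pairwise.1 (Finset.sortedLT_sort σ)) with ⟨_, h⟩ | ⟨hmem, _⟩
  · exact h
  · exact absurd ((Finset.mem_sort _).2 hi) hmem

lemma u_mul_uMon_not {i : Fin m} {σ : Finset (Fin m)} (hi : i ∉ σ) :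
    ∃ c : R, qU R K i * mkRK R m K (uMon R m σ) = c • mkRK R m K (uMon R m (insert i σ)) := by
  rw [mk_uMon, mk_uMon, sort_insert_eq hi]
  rcases s3 (R := R) (K := K) i _ (List.sortedLT_iff_pairwise.1 (Finset.sortedLT_sort σ)) with ⟨hmem, _⟩ | ⟨_, c, hc⟩
  · exact absurd ((Finset.mem_sort _).1 hmem) hi
  · exact ⟨c, hc⟩

lemma uMon_mul_t {i : Fin m} {ρ : Finset (Fin m)} (hi : i ∈ ρ) :
    mkRK R m K (uMon R m ρ) * qT R K i = mkRK R m K (uMon R m ρ) := by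
  rw [mk_uMon]
  exact s2 i _ ((Finset.mem_sort _).2 hi) (Finset.sort_nodup _ _)

lemma t_mul_uMon_mem {i : Fin m} {σ : Finset (Fin m)} (hi : i ∈ σ) :
    qT R K i * mkRK R m K (uMon R m σ) = -mkRK R m K (uMon R m σ) := by
  rw [mk_uMon]
  exact s1 i _ ((Finset.mem_sort _).2 hi)

lemma t_mul_uMon_not {i : Fin m} {σ : Finset (Fin m)} (hi : i ∉ σ) :
    qT R K i * mkRK R m K (uMon R m σ) = mkRK R m K (uMon R m σ) * qT R K i := by
  rw [mk_uMon]
  exact (commT_Ul (by simp [hi])).eq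

lemma uMon_tMon_absorb {i : Fin m} {ρ : Finset (Fin m)} (hi : i ∈ ρ) (τ : Finset (Fin m)) :
    mkRK R m K (uMon R m ρ) * mkRK R m K (tMon R m τ) =
      mkRK R m K (uMon R m ρ) * mkRK R m K (tMon R m (τ \ {i})) := by
  by_cases hiτ : i ∈ τ
  · have h2 : insert i (τ \ {i}) = τ := by rw [← Finset.erase_eq, Finset.insert_erase hiτ]
    have h3 : mkRK R m K (tMon R m τ) = qT R K i * mkRK R m K (tMon R m (τ \ {i})) := by
      rw [mk_tMon, mk_tMon]
      conv_lhs => rw [← h2]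
      exact qTl_sort_insert (by simp)
    rw [h3, ← mul_assoc, uMon_mul_t hi]
  · have h4 : τ \ {i} = τ := by rw [← Finset.erase_eq, Finset.erase_eq_of_notMem hiτ]
    rw [h4]

def monQ (R : Type*) [CommRing R] {m : ℕ} {K : Set (Finset (Fin m))} (p : Idx m K) :
    RK R m K := mkRK R m K (uMon R m p.1.1 * tMon R m (p.1.2 \ p.1.1))

def SpanS (R : Type*) [CommRing R] {m : ℕ} (K : Set (Finset (Fin m))) :
    Submodule R (RK R m K) := Submodule.span R (Set.range (monQ R (K := K)))

lemma monQ_mem (p : Idx m K) : monQ R p ∈ SpanS R K := Submodule.subset_span ⟨p, rfl⟩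

lemma t_mul_monQ_mem (i : Fin m) (p : Idx m K) : qT R K i * monQ R p ∈ SpanS R K := by
  obtain ⟨⟨σ, ω⟩, hsub, hσK⟩ := p
  rw [monQ]
  dsimp only
  rw [map_mul, ← mul_assoc]
  by_cases hi : i ∈ σ
  · rw [t_mul_uMon_mem hi, neg_mul, ← map_mul]
    exact (SpanS R K).neg_mem (monQ_mem ⟨(σ, ω), hsub, hσK⟩)
  · rw [t_mul_uMon_not hi, mul_assoc, t_mul_tMon]
    have hστ : σ ⊆ ω ∆ {i} := by
      intro x hx
      simp only [Finset.mem_symmDiff, Finset.mem_singleton]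
      exact Or.inl ⟨hsub hx, fun e => hi (e ▸ hx)⟩
    have key : (ω \ σ) ∆ {i} = (ω ∆ {i}) \ σ := by
      ext x
      by_cases hx : x = i <;> simp [Finset.mem_symmDiff, hx, hi] <;> tauto
    rw [key, ← map_mul]
    exact monQ_mem ⟨(σ, ω ∆ {i}), hστ, hσK⟩

lemma u_mul_monQ_mem (i : Fin m) (p : Idx m K) : qU R K i * monQ R p ∈ SpanS R K := by
  obtain ⟨⟨σ, ω⟩, hsub, hσK⟩ := p
  rw [monQ]
  dsimp only
  rw [map_mul, ← mul_assoc]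
  by_cases hi : i ∈ σ
  · rw [u_mul_uMon_mem hi, zero_mul]
    exact zero_mem _
  · obtain ⟨c, hc⟩ := u_mul_uMon_not (R := R) (K := K) hi
    rw [hc, smul_mul_assoc]
    by_cases hKi : insert i σ ∈ K
    · rw [uMon_tMon_absorb (Finset.mem_insert_self i σ) (ω \ σ)]
      have key : (insert i ω) \ (insert i σ) = (ω \ σ) \ {i} := by
        ext x
        by_cases hx : x = i <;> simp [hx, hi] <;> tauto
      rw [← key, ← map_mul]
      exact Submodule.smul_mem _ c
        (monQ_mem ⟨(insert i σ, insert i ω), Finset.insert_subset_insert i hsub, hKi⟩)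
    · rw [q_SR hKi, zero_mul, smul_zero]
      exact zero_mem _

lemma one_mem_SpanS (hK₀ : ∅ ∈ K) : (1 : RK R m K) ∈ SpanS R K := by
  have h : monQ R (vac hK₀ : Idx m K) = 1 := by
    rw [monQ, vac]
    dsimp only
    rw [show ((∅ : Finset (Fin m)) \ ∅) = ∅ from by simp, uMon, tMon, Finset.sort_empty]
    simp
  exact h ▸ monQ_mem _

lemma spanS_top (hK₀ : ∅ ∈ K) : SpanS R K = (⊤ : Submodule R (RK R m K)) := by
  rw [Submodule.eq_top_iff']
  intro x
  obtain ⟨y, rfl⟩ := RingQuot.mkAlgHom_surjective R (relRK R m K) x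
  have main : ∀ y : FreeAlgebra R (Fin m ⊕ Fin m), ∀ s ∈ SpanS R K,
      mkRK R m K y * s ∈ SpanS R K := by
    intro y
    induction y using FreeAlgebra.induction with
    | grade0 r =>
      intro s hs
      rw [AlgHom.commutes, ← Algebra.smul_def]
      exact Submodule.smul_mem _ r hs
    | grade1 x =>
      rcases x with i | i
      · intro s hs
        refine Submodule.span_induction ?_ ?_ ?_ ?_ hs
        · rintro t ⟨p, rfl⟩
          exact u_mul_monQ_mem i p
        · rw [mul_zero]; exact zero_mem _
        · intro a b _ _ ha hb
          rw [mul_add]; exact add_mem ha hb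
        · intro r a _ ha
          rw [mul_smul_comm]; exact Submodule.smul_mem _ r ha
      · intro s hs
        refine Submodule.span_induction ?_ ?_ ?_ ?_ hs
        · rintro t ⟨p, rfl⟩
          exact t_mul_monQ_mem i p
        · rw [mul_zero]; exact zero_mem _
        · intro a b _ _ ha hb
          rw [mul_add]; exact add_mem ha hb
        · intro r a _ ha
          rw [mul_smul_comm]; exact Submodule.smul_mem _ r ha
    | mul a b iha ihb =>
      intro s hs
      rw [map_mul, mul_assoc]
      exact iha _ (ihb s hs)
    | add a b iha ihb =>
      intro s hs
      rw [map_add, add_mul]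
      exact add_mem (iha s hs) (ihb s hs)
  have h1 := main y 1 (one_mem_SpanS hK₀)
  rwa [mul_one] at h1

end SRAux

theorem RK_free_basis_of_monomials (h2 : IsUnit (2 : R))
    (K : Set (Finset (Fin m))) (hK₀ : ∅ ∈ K)
    (hKdown : ∀ σ τ : Finset (Fin m), σ ⊆ τ → τ ∈ K → σ ∈ K) :
    ∃ b : Module.Basis {p : Finset (Fin m) × Finset (Fin m) // p.1 ⊆ p.2 ∧ p.1 ∈ K}
        R (RK R m K),
      ∀ p, b p = mkRK R m K (uMon R m p.1.1 * tMon R m (p.1.2 \ p.1.1)) := by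
  classical
  let ψ : (SRAux.Idx m K →₀ R) →ₗ[R] RK R m K :=
    Finsupp.linearCombination R (SRAux.monQ R (K := K))
  have hsurj : Function.Surjective ψ := by
    rw [← LinearMap.range_eq_top]
    show LinearMap.range (Finsupp.linearCombination R (SRAux.monQ R (K := K))) = ⊤
    rw [Finsupp.range_linearCombination]
    exact SRAux.spanS_top hK₀
  have hχ : ∀ z : SRAux.Idx m K →₀ R,
      (SRAux.Φ (R := R) (K := K) hKdown) (ψ z) (Finsupp.single (SRAux.vac hK₀) 1) = z := by
    have h : (LinearMap.applyₗ (R := R) (M₂ := SRAux.Idx m K →₀ R)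
        (Finsupp.single (SRAux.vac hK₀) (1:R))) ∘ₗ
        ((AlgHom.toLinearMap (SRAux.Φ (R := R) (K := K) hKdown) : RK R m K →ₗ[R]
          Module.End R (SRAux.Idx m K →₀ R)) ∘ₗ ψ) = LinearMap.id := by
      refine SRAux.endo_ext fun p => ?_
      simp only [LinearMap.comp_apply, AlgHom.toLinearMap_apply, LinearMap.applyₗ_apply_apply,
        LinearMap.id_apply]
      show (SRAux.Φ (R := R) (K := K) hKdown)
          (Finsupp.linearCombination R (SRAux.monQ R (K := K)) (Finsupp.single p 1))
          (Finsupp.single (SRAux.vac hK₀) 1) = Finsupp.single p 1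
      rw [Finsupp.linearCombination_single, one_smul, SRAux.monQ, SRAux.Φ_mk]
      exact SRAux.act_mon hK₀ hKdown p
    intro z
    have := congrArg (fun f => f z) h
    simpa using this
  have hinj : Function.Injective ψ := by
    intro z1 z2 hz
    rw [← hχ z1, ← hχ z2, hz]
  let e := LinearEquiv.ofBijective ψ ⟨hinj, hsurj⟩
  refine ⟨Module.Basis.ofRepr e.symm, fun p => ?_⟩
  rw [Module.Basis.coe_ofRepr]
  dsimp only
  rw [LinearEquiv.symm_symm]
  show ψ (Finsupp.single p 1) = _
  rw [Finsupp.linearCombination_single, one_smul]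
  rfl

end
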